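/- The datastream FEP construction is channel length regular: for any two n-length message lists M^0 and M^1 with |M^0_i| = |M^1_i| for every i, any n-length integer list P, and any n-length flush-flag list F, if C^0_i and C^1_i denote the ciphertext fragments produced by calling Send sequentially for i = 1..n (threading the sender state from Init) on inputs (M^0_i, P_i, F_i) and (M^1_i, P_i, F_i) respectively, then |C^0_i| = |C^1_i| for every i. -/
import Mathlib


/-! Byte strings -/

abbrev Byte := Fin 256
abbrev Bytes := List Byte

def byte (n : ℕ) : Byte := ⟨n % 256, Nat.mod_lt n (by norm_num)⟩
def b0 : Byte := byte 0
def b1 : Byte := byte 1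

/-- Two-byte (big-endian) encoding of a natural number. -/
def enc2 (n : ℕ) : Bytes := [byte (n / 256), byte n]

/-- Decode the first two bytes of a byte string as a big-endian natural number. -/
def dec2 : Bytes → ℕ
  | a :: b :: _ => 256 * a.val + b.val
  | _ => 0

/-- A deterministic nonce-based AEAD scheme on byte strings, with perfect
correctness, length additivity (`ℓ_Tag` bytes of overhead), and soundness of
decryption (`Dec` succeeds only on genuine encryptions). -/
structure AEAD where
  Key : Type
  lTag : ℕ
  lTag_pos : 0 < lTag
  Enc : Key → ℕ → Bytes → Bytes
  Dec : Key → ℕ → Bytes → Option Bytes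
  correct : ∀ k n m, Dec k n (Enc k n m) = some m
  lenAdd : ∀ k n m, (Enc k n m).length = m.length + lTag
  decSound : ∀ k n c m, Dec k n c = some m → c = Enc k n m

/-- `ℓ_len = 2 + ℓ_Tag`, the size of a length block. -/
def lLen (A : AEAD) : ℕ := 2 + A.lTag
/-- `ol = 2^16 - 1`, the largest payload-block length. -/
def ol : ℕ := 2 ^ 16 - 1
/-- `il = 2^16 - 3 - ℓ_Tag`, the largest plaintext length fitting in a payload block. -/
def il (A : AEAD) : ℕ := 2 ^ 16 - 3 - A.lTag

/-- Sender state: key, sequence number, plaintext buffer, output buffer. -/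
structure SenderSt (A : AEAD) where
  k : A.Key
  seqno : ℕ
  buf : Bytes
  obuf : Bytes

/-- The condition under which `Send` returns:
`|obuf| ≥ p` and (`f = 0` or `buf = ε`). -/
def retCond (A : AEAD) (st : SenderSt A) (p : ℤ) (f : Bool) : Prop :=
  p ≤ (st.obuf.length : ℤ) ∧ (f = false ∨ st.buf = [])

instance (A : AEAD) (st : SenderSt A) (p : ℤ) (f : Bool) :
    Decidable (retCond A st p f) := by
  unfold retCond
  infer_instance

/-- One recursive step of `Send` (lines 7–18): form a length block and a
payload block (with minimal padding `ℓ_p` so that the output buffer together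
with the new pair reaches `p` bytes, or the payload block is maximal), append
them to the output buffer, and consume `o = min(|buf|, il)` plaintext bytes. -/
def mkBlocks (A : AEAD) (st : SenderSt A) (p : ℤ) : SenderSt A :=
  let o : ℕ := min st.buf.length (il A)
  let base : ℕ := 2 + o + A.lTag
  let lp : ℕ := min (p - ((st.obuf.length + base + lLen A : ℕ) : ℤ)).toNat (ol - base)
  let lc : ℕ := base + lp
  { k := st.k
    seqno := st.seqno + 2
    buf := st.buf.drop o
    obuf := st.obuf ++ A.Enc st.k st.seqno (enc2 lc) ++
      A.Enc st.k (st.seqno + 1) (enc2 lp ++ List.replicate lp b0 ++ st.buf.take o) }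

/-- The recursion underlying `Send`, with explicit fuel bounding the number of
recursive calls; `none` means the fuel ran out before `Send` returned. -/
def sendFuel (A : AEAD) : ℕ → SenderSt A → ℤ → Bool → Option (SenderSt A × Bytes)
  | 0, _, _, _ => none
  | fuel + 1, st, p, f =>
    if retCond A st p f then
      let t : ℕ := (max p (if f then (st.obuf.length : ℤ) else 0)).toNat
      some ({ st with obuf := st.obuf.drop t }, st.obuf.take t)
    else
      sendFuel A fuel (mkBlocks A st p) p f

/-- `Send(st_S, m, p, f)`, computed with the given recursion fuel. -/
def sendCall (A : AEAD) (fuel : ℕ) (st : SenderSt A) (m : Bytes) (p : ℤ) (f : Bool) :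
    Option (SenderSt A × Bytes) :=
  sendFuel A fuel { st with buf := st.buf ++ m } p f

/-- Receiver state: key, sequence number, ciphertext buffer, fail flag. -/
structure RecvSt (A : AEAD) where
  k : A.Key
  seqno : ℕ
  buf : Bytes
  fail : Bool

/-- One iteration of the `Recv` processing loop.  `Sum.inl` means the loop
continues with the new state and accumulated output; `Sum.inr` means `Recv`
returns (either by a decryption failure, which sets the fail flag and returns
`(ε, 0)`, or by stopping the loop and returning the accumulated message). -/
def recvStep (A : AEAD) (st : RecvSt A) (m : Bytes) :
    (RecvSt A × Bytes) ⊕ (RecvSt A × Bytes × Bool) :=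
  if lLen A ≤ st.buf.length then
    match A.Dec st.k st.seqno (st.buf.take (lLen A)) with
    | none => Sum.inr ({ st with fail := true }, [], false)
    | some lb =>
      let lc := dec2 lb
      if lLen A + lc ≤ st.buf.length then
        let st' : RecvSt A := { st with buf := st.buf.drop (lLen A + lc) }
        match A.Dec st.k (st.seqno + 1) ((st.buf.drop (lLen A)).take lc) with
        | none => Sum.inr ({ st' with fail := true }, [], false)
        | some m' =>
          let lp := min (dec2 m') (m'.length - 2)
          Sum.inl ({ st' with seqno := st.seqno + 2 }, m ++ m'.drop (2 + lp))
      else Sum.inr (st, m, false)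
  else Sum.inr (st, m, false)

/-- The `Recv` processing loop, with explicit fuel bounding the number of
iterations; `none` means the fuel ran out before the loop finished. -/
def recvLoop (A : AEAD) : ℕ → RecvSt A → Bytes → Option (RecvSt A × Bytes × Bool)
  | 0, _, _ => none
  | fuel + 1, st, m =>
    match recvStep A st m with
    | Sum.inr r => some r
    | Sum.inl (st', m') => recvLoop A fuel st' m'

/-- `Recv(st_R, c)`, computed with the given loop fuel. -/
def recvCall (A : AEAD) (fuel : ℕ) (st : RecvSt A) (c : Bytes) :
    Option (RecvSt A × Bytes × Bool) :=
  if st.fail then some (st, [], false)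
  else recvLoop A fuel { st with buf := st.buf ++ c } []

/-- Calling `Send` sequentially on a list of `(message, length, flush)` inputs,
threading the sender state, and collecting the output ciphertext fragments. -/
def sendSeq (A : AEAD) (fuel : ℕ) :
    SenderSt A → List (Bytes × ℤ × Bool) → Option (SenderSt A × List Bytes)
  | st, [] => some (st, [])
  | st, (m, p, f) :: rest =>
    match sendCall A fuel st m p f with
    | none => none
    | some (st', c) =>
      match sendSeq A fuel st' rest with
      | none => none
      | some (stf, cs) => some (stf, c :: cs)

/-- Length relation between two sender states. -/
def StRel (A : AEAD) (s t : SenderSt A) : Prop :=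
  s.buf.length = t.buf.length ∧ s.obuf.length = t.obuf.length

lemma strel_mkBlocks (A : AEAD) (s t : SenderSt A) (p : ℤ) (h : StRel A s t) :
    StRel A (mkBlocks A s p) (mkBlocks A t p) := by
  obtain ⟨hb, ho⟩ := h
  unfold mkBlocks StRel
  simp [List.length_append, A.lenAdd, enc2, hb, ho]

lemma strel_retCond (A : AEAD) (s t : SenderSt A) (p : ℤ) (f : Bool) (h : StRel A s t) :
    retCond A s p f ↔ retCond A t p f := by
  obtain ⟨hb, ho⟩ := h
  unfold retCond
  rw [ho, List.length_eq_zero_iff.symm, List.length_eq_zero_iff.symm, hb]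

lemma rel_sendFuel (A : AEAD) (p : ℤ) (f : Bool) :
    ∀ (fuel0 fuel1 : ℕ) (s t : SenderSt A) (s' t' : SenderSt A) (c0 c1 : Bytes),
    StRel A s t →
    sendFuel A fuel0 s p f = some (s', c0) →
    sendFuel A fuel1 t p f = some (t', c1) →
    StRel A s' t' ∧ c0.length = c1.length := by
  intro fuel0
  induction fuel0 with
  | zero => intro fuel1 s t s' t' c0 c1 _ h0; simp [sendFuel] at h0
  | succ n ih =>
    intro fuel1 s t s' t' c0 c1 hrel h0 h1
    cases fuel1 with
    | zero => simp [sendFuel] at h1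
    | succ m =>
      rw [sendFuel] at h0 h1
      by_cases hc : retCond A s p f
      · have hc' : retCond A t p f := (strel_retCond A s t p f hrel).mp hc
        rw [if_pos hc] at h0; rw [if_pos hc'] at h1
        obtain ⟨hb, ho⟩ := hrel
        injection h0 with h0; injection h1 with h1
        obtain ⟨rfl, rfl⟩ := Prod.mk.injEq .. ▸ Prod.mk.inj h0.symm
        obtain ⟨rfl, rfl⟩ := Prod.mk.injEq .. ▸ Prod.mk.inj h1.symm
        constructor
        · exact ⟨hb, by simp [ho]⟩
        · simp [ho]
      · have hc' : ¬ retCond A t p f := fun h => hc ((strel_retCond A s t p f hrel).mpr h)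
        rw [if_neg hc] at h0; rw [if_neg hc'] at h1
        exact ih m _ _ _ _ _ _ (strel_mkBlocks A s t p hrel) h0 h1

lemma rel_sendCall (A : AEAD) (fuel0 fuel1 : ℕ) (s t : SenderSt A)
    (m0 m1 : Bytes) (p : ℤ) (f : Bool) (s' t' : SenderSt A) (c0 c1 : Bytes)
    (hrel : StRel A s t) (hm : m0.length = m1.length)
    (h0 : sendCall A fuel0 s m0 p f = some (s', c0))
    (h1 : sendCall A fuel1 t m1 p f = some (t', c1)) :
    StRel A s' t' ∧ c0.length = c1.length := by
  apply rel_sendFuel A p f fuel0 fuel1 _ _ _ _ _ _ _ h0 h1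
  exact ⟨by simp [hrel.1, hm], hrel.2⟩

lemma rel_sendSeq (A : AEAD) (fuel0 fuel1 : ℕ) :
    ∀ (L0 L1 : List (Bytes × ℤ × Bool)),
    List.Forall₂ (fun a b => a.1.length = b.1.length ∧ a.2 = b.2) L0 L1 →
    ∀ (s t : SenderSt A) (s' t' : SenderSt A) (C0 C1 : List Bytes),
    StRel A s t →
    sendSeq A fuel0 s L0 = some (s', C0) →
    sendSeq A fuel1 t L1 = some (t', C1) →
    List.Forall₂ (fun c0 c1 : Bytes => c0.length = c1.length) C0 C1 := by
  intro L0 L1 hF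
  induction hF with
  | nil =>
    intro s t s' t' C0 C1 _ h0 h1
    simp only [sendSeq, Option.some.injEq, Prod.mk.injEq] at h0 h1
    rw [← h0.2, ← h1.2]
    exact List.Forall₂.nil
  | @cons a b l0 l1 hab _ ih =>
    intro s t s' t' C0 C1 hrel h0 h1
    obtain ⟨m0, p0, f0⟩ := a
    obtain ⟨m1, p1, f1⟩ := b
    obtain ⟨hm, hpf⟩ := hab
    simp only at hm hpf
    obtain ⟨rfl, rfl⟩ : p0 = p1 ∧ f0 = f1 := Prod.mk.inj hpf
    cases hc0 : sendCall A fuel0 s m0 p0 f0 with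
    | none => simp [sendSeq, hc0] at h0
    | some r0 =>
      cases hc1 : sendCall A fuel1 t m1 p0 f0 with
      | none => simp [sendSeq, hc1] at h1
      | some r1 =>
        obtain ⟨s1, c0⟩ := r0
        obtain ⟨t1, c1⟩ := r1
        obtain ⟨hrel', hc⟩ := rel_sendCall A fuel0 fuel1 s t m0 m1 p0 f0 s1 t1 c0 c1 hrel hm hc0 hc1
        cases hs0 : sendSeq A fuel0 s1 l0 with
        | none => simp [sendSeq, hc0, hs0] at h0
        | some r0' =>
          cases hs1 : sendSeq A fuel1 t1 l1 with
          | none => simp [sendSeq, hc1, hs1] at h1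
          | some r1' =>
            obtain ⟨sf, cs0⟩ := r0'
            obtain ⟨tf, cs1⟩ := r1'
            simp only [sendSeq, hc0, hs0, hc1, hs1, Option.some.injEq, Prod.mk.injEq] at h0 h1
            rw [← h0.2, ← h1.2]
            exact List.Forall₂.cons hc (ih s1 t1 sf tf cs0 cs1 hrel' hs0 hs1)

/-- The datastream FEP construction is channel length regular:
for any two `n`-length message lists `M⁰` and `M¹` with `|M⁰ᵢ| = |M¹ᵢ|` for
every `i`, any `n`-length integer list `P`, and any `n`-length flush-flag list
`F`, the ciphertext fragments `C⁰ᵢ` and `C¹ᵢ` produced by calling `Send`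
sequentially for `i = 1..n` (threading the sender state from `Init`) on inputs
`(M⁰ᵢ, Pᵢ, Fᵢ)` and `(M¹ᵢ, Pᵢ, Fᵢ)` respectively satisfy `|C⁰ᵢ| = |C¹ᵢ|` for
every `i`. -/
theorem stmt7 (A : AEAD) (k : A.Key) (fuel0 fuel1 : ℕ)
    (M0 M1 : List Bytes) (P : List ℤ) (F : List Bool)
    (hM01 : M0.length = M1.length) (hP : P.length = M0.length)
    (hF : F.length = M0.length)
    (hM : ∀ (i : ℕ) (h0 : i < M0.length) (h1 : i < M1.length),
      (M0[i]'h0).length = (M1[i]'h1).length)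
    (st0 st1 : SenderSt A) (C0 C1 : List Bytes)
    (h0 : sendSeq A fuel0 ⟨k, 0, [], []⟩ (M0.zip (P.zip F)) = some (st0, C0))
    (h1 : sendSeq A fuel1 ⟨k, 0, [], []⟩ (M1.zip (P.zip F)) = some (st1, C1)) :
    ∀ (i : ℕ) (hi0 : i < C0.length) (hi1 : i < C1.length),
      (C0[i]'hi0).length = (C1[i]'hi1).length := by
  have hzip : List.Forall₂ (fun a b : Bytes × ℤ × Bool => a.1.length = b.1.length ∧ a.2 = b.2)
      (M0.zip (P.zip F)) (M1.zip (P.zip F)) := by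
    rw [List.forall₂_iff_get]
    constructor
    · simp [List.length_zip, hM01]
    · intro i h0' h1'
      simp only [List.length_zip, lt_min_iff] at h0' h1'
      simp only [List.get_eq_getElem, List.getElem_zip]
      exact ⟨hM i h0'.1 h1'.1, by trivial⟩
  have hmain := rel_sendSeq A fuel0 fuel1 _ _ hzip ⟨k, 0, [], []⟩ ⟨k, 0, [], []⟩
    st0 st1 C0 C1 ⟨rfl, rfl⟩ h0 h1
  rw [List.forall₂_iff_get] at hmain
  intro i hi0 hi1
  exact hmain.2 i hi0 hi1
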